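/- Let H be a real Hilbert space with inner product ⟨·,·⟩, let T₁ be α₁-averaged and T₂ be α₂-averaged operators on H with α₁, α₂ ∈ (0,1). Then the composition T₁∘T₂ is φ-averaged where φ = (α₁ + α₂ − 2α₁α₂)/(1 − α₁α₂), and φ ∈ (0,1). -/

import Mathlib

lemma harmonic_mean_ineq' {H : Type*} [NormedAddCommGroup H] [InnerProductSpace ℝ H]
    (a b : ℝ) (ha : 0 < a) (hb : 0 < b) (u v : H) :
    (a * b / (a + b)) * ‖u + v‖ ^ 2 ≤ a * ‖u‖ ^ 2 + b * ‖v‖ ^ 2 := by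
  have hab : 0 < a + b := by linarith
  have e0 : (0:ℝ) ≤ ‖a • u - b • v‖ ^ 2 := by positivity
  have e1 : ‖a • u - b • v‖ ^ 2 =
      a ^ 2 * ‖u‖ ^ 2 - 2 * (a * b) * (inner ℝ u v : ℝ) + b ^ 2 * ‖v‖ ^ 2 := by
    rw [norm_sub_sq_real, inner_smul_left, inner_smul_right, norm_smul, norm_smul]
    simp [abs_of_pos ha, abs_of_pos hb, mul_pow]
    ring
  have e2 : ‖u + v‖ ^ 2 = ‖u‖ ^ 2 + 2 * (inner ℝ u v : ℝ) + ‖v‖ ^ 2 := norm_add_sq_real u v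
  rw [e1] at e0
  rw [div_mul_eq_mul_div, div_le_iff₀ hab, e2]
  nlinarith [e0]

lemma phi_eq' (α₁ α₂ : ℝ) (h1 : α₁ ≠ 0) (h2 : α₂ ≠ 0)
    (h3 : (1 - α₁ * α₂) ≠ 0) (h4 : (α₁ + α₂ - 2 * α₁ * α₂) ≠ 0) :
    (1 - (α₁ + α₂ - 2 * α₁ * α₂) / (1 - α₁ * α₂)) /
      ((α₁ + α₂ - 2 * α₁ * α₂) / (1 - α₁ * α₂)) =
    (1 - α₂) / α₂ * ((1 - α₁) / α₁) / ((1 - α₂) / α₂ + (1 - α₁) / α₁) := by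
  have eL : (1 - (α₁ + α₂ - 2 * α₁ * α₂) / (1 - α₁ * α₂)) /
      ((α₁ + α₂ - 2 * α₁ * α₂) / (1 - α₁ * α₂)) =
      ((1 - α₁) * (1 - α₂)) / (α₁ + α₂ - 2 * α₁ * α₂) := by
    rw [one_sub_div h3, div_div_div_cancel_right₀]
    · congr 1; ring
    · exact h3
  have eR : (1 - α₂) / α₂ * ((1 - α₁) / α₁) / ((1 - α₂) / α₂ + (1 - α₁) / α₁) =
      ((1 - α₁) * (1 - α₂)) / (α₁ + α₂ - 2 * α₁ * α₂) := by
    rw [div_add_div _ _ h2 h1, div_mul_div_comm, div_div_div_cancel_right₀]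
    · rw [div_eq_div_iff (fun h => h4 (by nlinarith [h])) h4]; ring
    · exact mul_ne_zero h2 h1
  rw [eL, eR]

theorem stmt_8 {H : Type*} [NormedAddCommGroup H] [InnerProductSpace ℝ H] [CompleteSpace H]
    (α₁ α₂ : ℝ) (hα₁ : α₁ ∈ Set.Ioo (0 : ℝ) 1) (hα₂ : α₂ ∈ Set.Ioo (0 : ℝ) 1)
    (T₁ T₂ : H → H)
    (hT₁ : ∀ x y : H, ‖T₁ x - T₁ y‖ ^ 2 ≤
      ‖x - y‖ ^ 2 - ((1 - α₁) / α₁) * ‖(x - T₁ x) - (y - T₁ y)‖ ^ 2)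
    (hT₂ : ∀ x y : H, ‖T₂ x - T₂ y‖ ^ 2 ≤
      ‖x - y‖ ^ 2 - ((1 - α₂) / α₂) * ‖(x - T₂ x) - (y - T₂ y)‖ ^ 2) :
    (α₁ + α₂ - 2 * α₁ * α₂) / (1 - α₁ * α₂) ∈ Set.Ioo (0 : ℝ) 1 ∧
    ∀ x y : H, ‖T₁ (T₂ x) - T₁ (T₂ y)‖ ^ 2 ≤
      ‖x - y‖ ^ 2 -
        ((1 - (α₁ + α₂ - 2 * α₁ * α₂) / (1 - α₁ * α₂)) /
            ((α₁ + α₂ - 2 * α₁ * α₂) / (1 - α₁ * α₂))) *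
          ‖(x - T₁ (T₂ x)) - (y - T₁ (T₂ y))‖ ^ 2 := by
  obtain ⟨ha1, hb1⟩ := hα₁
  obtain ⟨ha2, hb2⟩ := hα₂
  have hnum : 0 < α₁ + α₂ - 2 * α₁ * α₂ := by nlinarith
  have hden : 0 < 1 - α₁ * α₂ := by nlinarith
  have hφlt : (α₁ + α₂ - 2 * α₁ * α₂) / (1 - α₁ * α₂) < 1 := by
    rw [div_lt_one hden]; nlinarith
  have hφpos : 0 < (α₁ + α₂ - 2 * α₁ * α₂) / (1 - α₁ * α₂) := div_pos hnum hden
  refine ⟨⟨hφpos, hφlt⟩, ?_⟩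
  set a : ℝ := (1 - α₂) / α₂ with ha
  set b : ℝ := (1 - α₁) / α₁ with hb
  have hapos : 0 < a := div_pos (by linarith) ha2
  have hbpos : 0 < b := div_pos (by linarith) ha1
  have hK : (1 - (α₁ + α₂ - 2 * α₁ * α₂) / (1 - α₁ * α₂)) /
      ((α₁ + α₂ - 2 * α₁ * α₂) / (1 - α₁ * α₂)) = a * b / (a + b) := by
    rw [ha, hb]
    exact phi_eq' α₁ α₂ (ne_of_gt ha1) (ne_of_gt ha2) (ne_of_gt hden) (ne_of_gt hnum)
  intro x y
  rw [hK]
  have H2 := hT₂ x y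
  have H1 := hT₁ (T₂ x) (T₂ y)
  set u : H := (x - T₂ x) - (y - T₂ y) with hu
  set v : H := (T₂ x - T₁ (T₂ x)) - (T₂ y - T₁ (T₂ y)) with hv
  have huv : (x - T₁ (T₂ x)) - (y - T₁ (T₂ y)) = u + v := by
    rw [hu, hv]; abel
  rw [huv]
  have key := harmonic_mean_ineq' a b hapos hbpos u v
  linarith
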